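/- arXiv:2002.03626 — 4 statements merged into one kernel-verified Lean document; each statement's English description precedes it below -/
import Mathlib

section
/- Let (M, φ) be a representation of the labelled quiver Q consistent with its labelling, and let u, v, w be vertices of Q. Then for all f ∈ R⟨X⟩_{v,w} and g ∈ R⟨X⟩_{u,v}, the product fg lies in R⟨X⟩_{u,w} and φ_{u,w}(fg) = φ_{v,w}(f) ∘ φ_{u,v}(g). -/
open scoped BigOperators

universe u₁ u₂ u₃ u₄ u₅

/-- A labelled quiver: a directed multigraph with edges labelled in `X`. -/
structure LQuiver (V : Type u₁) (E : Type u₂) (X : Type u₃) where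
  src : E → V
  tgt : E → V
  lab : E → X

namespace LQuiver

variable {V : Type u₁} {E : Type u₂} {X : Type u₃}

/-- Paths in the quiver (possibly empty). -/
inductive Walk (Q : LQuiver V E X) : V → V → Type (max u₁ u₂)
  | nil (v : V) : Walk Q v v
  | cons {u : V} (e : E) (p : Walk Q u (Q.src e)) : Walk Q u (Q.tgt e)

/-- The label of a path, a word in the free monoid `⟨X⟩`. -/
def wlabel (Q : LQuiver V E X) : ∀ {u v : V}, Q.Walk u v → FreeMonoid X
  | _, _, .nil _ => 1
  | _, _, .cons e p => FreeMonoid.of (Q.lab e) * Q.wlabel p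

/-- The signature `σ(m)` of a monomial (word) `m`. -/
def sigW (Q : LQuiver V E X) (m : FreeMonoid X) : Set (V × V) :=
  {p : V × V | ∃ w : Q.Walk p.1 p.2, Q.wlabel w = m}

variable {R : Type u₄} [CommRing R]

/-- The signature `σ(f)` of a noncommutative polynomial `f ∈ R⟨X⟩`. -/
def sig (Q : LQuiver V E X) (f : MonoidAlgebra R (FreeMonoid X)) : Set (V × V) :=
  ⋂ m ∈ f.coeff.support, Q.sigW m

/-- A polynomial is compatible with `Q` if its signature is nonempty. -/
def Compatible (Q : LQuiver V E X) (f : MonoidAlgebra R (FreeMonoid X)) : Prop :=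
  (Q.sig f).Nonempty

/-- The projection `s(f)` of `σ(f)` on sources. -/
def srcSet (Q : LQuiver V E X) (f : MonoidAlgebra R (FreeMonoid X)) : Set V :=
  Prod.fst '' Q.sig f

/-- The projection `t(f)` of `σ(f)` on targets. -/
def tgtSet (Q : LQuiver V E X) (f : MonoidAlgebra R (FreeMonoid X)) : Set V :=
  Prod.snd '' Q.sig f

/-- `f` is a `Q`-consequence of `F`. -/
def QConsequence (Q : LQuiver V E X) (F : Set (MonoidAlgebra R (FreeMonoid X)))
    (f : MonoidAlgebra R (FreeMonoid X)) : Prop :=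
  Q.Compatible f ∧
  ∃ (n : ℕ) (g a b : Fin n → MonoidAlgebra R (FreeMonoid X)),
    (∀ i, g i ∈ F) ∧
    f = ∑ i, a i * g i * b i ∧
    ∀ uv ∈ Q.sig f, ∀ i, ∃ ui vi : V,
      (uv.1, ui) ∈ Q.sig (b i) ∧ (ui, vi) ∈ Q.sig (g i) ∧ (vi, uv.2) ∈ Q.sig (a i)

end LQuiver

/-- The monomial `m` regarded as a polynomial in `R⟨X⟩`. -/
noncomputable def mono (R : Type u₄) [CommRing R] {X : Type u₃} (m : FreeMonoid X) :
    MonoidAlgebra R (FreeMonoid X) :=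
  MonoidAlgebra.single m 1

/-- One rewriting step with divisor monomials selected by `DM`. -/
def RewriteStep {R : Type u₄} [CommRing R] {X : Type u₃}
    (G : Set (MonoidAlgebra R (FreeMonoid X)))
    (DM : MonoidAlgebra R (FreeMonoid X) → Set (FreeMonoid X))
    (f h : MonoidAlgebra R (FreeMonoid X)) : Prop :=
  ∃ g ∈ G, ∃ m ∈ DM g, ∃ a b : FreeMonoid X, ∃ lam : R,
    a * m * b ∈ f.coeff.support ∧ h = f + lam • (mono R a * g * mono R b)

/-- A monomial order: a well-founded linear order compatible with multiplication. -/
def IsMonomialOrder {X : Type u₃} (ord : LinearOrder (FreeMonoid X)) : Prop :=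
  WellFounded ord.lt ∧
    ∀ a b m m' : FreeMonoid X, ord.le m m' → ord.le (a * m * b) (a * m' * b)

/-- The leading monomial of a polynomial w.r.t. a linear order on monomials
(defined as `1` for the zero polynomial). -/
noncomputable def LM {K : Type u₄} [CommRing K] {X : Type u₃}
    (ord : LinearOrder (FreeMonoid X)) (f : MonoidAlgebra K (FreeMonoid X)) : FreeMonoid X :=
  letI := ord
  letI : Decidable (f = 0) := Classical.dec _
  if h : f = 0 then 1 else f.coeff.support.max' (Finsupp.support_nonempty_iff.mpr (MonoidAlgebra.coeff_eq_zero.not.mpr h))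

/-- One step of standard polynomial reduction w.r.t. a set `G` and a monomial order. -/
def ReduceStep {K : Type u₄} [Field K] {X : Type u₃} (ord : LinearOrder (FreeMonoid X))
    (G : Set (MonoidAlgebra K (FreeMonoid X)))
    (f h : MonoidAlgebra K (FreeMonoid X)) : Prop :=
  ∃ g ∈ G, g ≠ 0 ∧ ∃ a b : FreeMonoid X,
    a * LM ord g * b ∈ f.coeff.support ∧
    h = f - (f.coeff (a * LM ord g * b) / g.coeff (LM ord g)) • (mono K a * g * mono K b)

/-- `f` is `Q`-order compatible w.r.t. the order `ord`. -/
def QOrderCompatible {V : Type u₁} {E : Type u₂} {X : Type u₃} {K : Type u₄} [CommRing K]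
    (Q : LQuiver V E X) (ord : LinearOrder (FreeMonoid X))
    (f : MonoidAlgebra K (FreeMonoid X)) : Prop :=
  Q.Compatible f ∧ Q.sigW (LM ord f) = Q.sig f

/-- A representation of a labelled quiver. -/
structure QRep (R : Type u₄) [CommRing R] {V : Type u₁} {E : Type u₂} {X : Type u₃}
    (Q : LQuiver V E X) where
  M : V → Type u₅
  [addcg : ∀ v, AddCommGroup (M v)]
  [mod : ∀ v, Module R (M v)]
  φ : (e : E) → M (Q.src e) →ₗ[R] M (Q.tgt e)

attribute [instance] QRep.addcg QRep.mod

namespace QRep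

variable {R : Type u₄} [CommRing R] {V : Type u₁} {E : Type u₂} {X : Type u₃}
  {Q : LQuiver V E X}

/-- The linear map induced by a path. -/
def walkMap (ρ : QRep R Q) : ∀ {u v : V}, Q.Walk u v → (ρ.M u →ₗ[R] ρ.M v)
  | _, _, .nil _ => LinearMap.id
  | _, _, .cons e p => (ρ.φ e).comp (ρ.walkMap p)

/-- The representation is consistent with the labelling: two paths with the same
source, target and label induce the same linear map. -/
def Consistent (ρ : QRep R Q) : Prop :=
  ∀ (u v : V) (p q : Q.Walk u v), Q.wlabel p = Q.wlabel q → ρ.walkMap p = ρ.walkMap q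

/-- The realization `φ_{v,w}(f)` of a polynomial `f` (for a consistent representation and
`(v,w) ∈ σ(f)`, this is the well-defined linear map of the paper). -/
noncomputable def real (ρ : QRep R Q) (v w : V) (f : MonoidAlgebra R (FreeMonoid X)) :
    ρ.M v →ₗ[R] ρ.M w :=
  ∑ m ∈ f.coeff.support, f.coeff m •
    (letI : Decidable (∃ p : Q.Walk v w, Q.wlabel p = m) := Classical.dec _
     if h : ∃ p : Q.Walk v w, Q.wlabel p = m then ρ.walkMap h.choose else 0)

end QRep

section Aux

variable {V : Type u₁} {E : Type u₂} {X : Type u₃} {Q : LQuiver V E X}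

/-- Composition (append) of walks. -/
def LQuiver.Walk.append : ∀ {u v w : V}, Q.Walk v w → Q.Walk u v → Q.Walk u w
  | _, _, _, .nil _, q => q
  | _, _, _, .cons e p, q => .cons e (p.append q)

theorem LQuiver.wlabel_append : ∀ {u v w : V} (p : Q.Walk v w) (q : Q.Walk u v),
    Q.wlabel (p.append q) = Q.wlabel p * Q.wlabel q
  | _, _, _, .nil _, q => by simp [LQuiver.Walk.append, LQuiver.wlabel]
  | _, _, _, .cons e p, q => by
      simp [LQuiver.Walk.append, LQuiver.wlabel, LQuiver.wlabel_append p q, mul_assoc]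

variable {R : Type u₄} [CommRing R]

theorem QRep.walkMap_append (ρ : QRep R Q) :
    ∀ {u v w : V} (p : Q.Walk v w) (q : Q.Walk u v),
    ρ.walkMap (p.append q) = (ρ.walkMap p).comp (ρ.walkMap q)
  | _, _, _, .nil _, q => by simp [LQuiver.Walk.append, QRep.walkMap]
  | _, _, _, .cons e p, q => by
      simp [LQuiver.Walk.append, QRep.walkMap, QRep.walkMap_append ρ p q,
        LinearMap.comp_assoc]

/-- Realization of a single monomial. -/
noncomputable def realM (ρ : QRep R Q) (v w : V) (m : FreeMonoid X) : ρ.M v →ₗ[R] ρ.M w :=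
  letI : Decidable (∃ p : Q.Walk v w, Q.wlabel p = m) := Classical.dec _
  if h : ∃ p : Q.Walk v w, Q.wlabel p = m then ρ.walkMap h.choose else 0

theorem realM_spec (ρ : QRep R Q) (hρ : ρ.Consistent) {v w : V} {m : FreeMonoid X}
    (p : Q.Walk v w) (hp : Q.wlabel p = m) : realM ρ v w m = ρ.walkMap p := by
  have h : ∃ p : Q.Walk v w, Q.wlabel p = m := ⟨p, hp⟩
  rw [realM, dif_pos h]
  exact hρ v w h.choose p (h.choose_spec.trans hp.symm)

theorem real_eq_sum (ρ : QRep R Q) (v w : V) (f : MonoidAlgebra R (FreeMonoid X)) :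
    ρ.real v w f = ∑ m ∈ f.coeff.support, f.coeff m • realM ρ v w m := rfl

theorem realM_mul (ρ : QRep R Q) (hρ : ρ.Consistent) (u v w : V) {m₁ m₂ : FreeMonoid X}
    (h₁ : ∃ p : Q.Walk v w, Q.wlabel p = m₁) (h₂ : ∃ p : Q.Walk u v, Q.wlabel p = m₂) :
    realM ρ u w (m₁ * m₂) = (realM ρ v w m₁).comp (realM ρ u v m₂) := by
  obtain ⟨p, hp⟩ := h₁
  obtain ⟨q, hq⟩ := h₂
  rw [realM_spec ρ hρ p hp, realM_spec ρ hρ q hq,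
    realM_spec ρ hρ (p.append q) (by rw [LQuiver.wlabel_append, hp, hq]),
    QRep.walkMap_append]

end Aux

open scoped Pointwise

/-- for a consistent representation, `φ_{u,w}(fg) = φ_{v,w}(f) ∘ φ_{u,v}(g)`. -/
theorem real_mul {V E X R : Type*} [CommRing R] {Q : LQuiver V E X}
    (ρ : QRep R Q) (hρ : ρ.Consistent) (u v w : V)
    (f g : MonoidAlgebra R (FreeMonoid X))
    (hf : (v, w) ∈ Q.sig f) (hg : (u, v) ∈ Q.sig g) :
    (u, w) ∈ Q.sig (f * g) ∧
      ρ.real u w (f * g) = (ρ.real v w f).comp (ρ.real u v g) := by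
  classical
  letI : DecidableEq (FreeMonoid X) := Classical.decEq _
  have hfw : ∀ m ∈ f.coeff.support, ∃ p : Q.Walk v w, Q.wlabel p = m := fun m hm =>
    Set.mem_iInter₂.mp hf m hm
  have hgw : ∀ m ∈ g.coeff.support, ∃ p : Q.Walk u v, Q.wlabel p = m := fun m hm =>
    Set.mem_iInter₂.mp hg m hm
  constructor
  · refine Set.mem_iInter₂.mpr fun m hm => ?_
    have hm' : m ∈ f.coeff.support * g.coeff.support := MonoidAlgebra.support_coeff_mul_subset f g hm
    obtain ⟨m₁, hm₁, m₂, hm₂, rfl⟩ := Finset.mem_mul.mp hm'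
    obtain ⟨p, hp⟩ := hfw m₁ hm₁
    obtain ⟨q, hq⟩ := hgw m₂ hm₂
    exact ⟨p.append q, by rw [LQuiver.wlabel_append, hp, hq]⟩
  · set T : MonoidAlgebra R (FreeMonoid X) →ₗ[R] (ρ.M u →ₗ[R] ρ.M w) :=
      (Finsupp.lsum R fun m => LinearMap.toSpanSingleton R _ (realM ρ u w m)) ∘ₗ
        (MonoidAlgebra.coeffLinearEquiv R).toLinearMap with hT
    have hTreal : ρ.real u w (f * g) = T (f * g) := by
      rw [real_eq_sum, hT]
      rfl
    have hmul : f * g = ∑ m₁ ∈ f.coeff.support, ∑ m₂ ∈ g.coeff.support,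
        MonoidAlgebra.single (m₁ * m₂) (f.coeff m₁ * g.coeff m₂) := by
      rw [MonoidAlgebra.mul_def, Finsupp.sum]
      exact Finset.sum_congr rfl fun m₁ _ => rfl
    have hTsingle : ∀ (m : FreeMonoid X) (c : R),
        T (MonoidAlgebra.single m c) = c • realM ρ u w m := by
      intro m c
      exact Finsupp.sum_single_index (by simp)
    rw [hTreal, hmul, map_sum]
    simp only [map_sum, hTsingle]
    rw [real_eq_sum, real_eq_sum]
    ext x
    simp only [LinearMap.sum_apply, LinearMap.coe_comp, Function.comp_apply,
      LinearMap.smul_apply, map_sum, map_smul, Finset.smul_sum, smul_smul]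
    rw [Finset.sum_comm]
    refine Finset.sum_congr rfl fun m₁ hm₁ => Finset.sum_congr rfl fun m₂ hm₂ => ?_
    rw [realM_mul ρ hρ u v w (hfw m₂ hm₂) (hgw m₁ hm₁), mul_comm (g.coeff m₁) (f.coeff m₂)]
    rfl
end

section
/- Let g ∈ R⟨X⟩ be a polynomial and m ∈ supp(g) such that σ(m) = σ(g). If a polynomial f can be rewritten to h = f + λ·a·g·b using (g, m) (so a, b ∈ ⟨X⟩ are monomials with a·m·b ∈ supp(f) and λ ∈ R), then σ(f) ⊆ σ(h) and σ(f) ⊆ σ(a·m·b). -/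
open scoped BigOperators

universe u₁ u₂ u₃ u₄ u₅

section AuxWalk

variable {V : Type u₁} {E : Type u₂} {X : Type u₃}

/-- Concatenation of walks. -/
def LQuiver.Walk.comp {Q : LQuiver V E X} : ∀ {u v w : V},
    Q.Walk u v → Q.Walk v w → Q.Walk u w
  | _, _, _, p, .nil _ => p
  | _, _, _, p, .cons e q => .cons e (p.comp q)

lemma LQuiver.wlabel_comp (Q : LQuiver V E X) {u v w : V}
    (p : Q.Walk u v) (q : Q.Walk v w) :
    Q.wlabel (p.comp q) = Q.wlabel q * Q.wlabel p := by
  induction q with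
  | nil => simp [LQuiver.Walk.comp, LQuiver.wlabel]
  | cons e q ih =>
      simp only [LQuiver.Walk.comp, LQuiver.wlabel, ih, mul_assoc]

lemma LQuiver.walk_split (Q : LQuiver V E X) {u v : V} (w : Q.Walk u v) :
    ∀ s t : FreeMonoid X, Q.wlabel w = s * t →
      ∃ (x : V) (p : Q.Walk u x) (q : Q.Walk x v),
        Q.wlabel p = t ∧ Q.wlabel q = s := by
  induction w with
  | nil =>
      intro s t hst
      simp only [LQuiver.wlabel] at hst
      have h1 : FreeMonoid.toList s ++ FreeMonoid.toList t = [] :=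
        (congrArg FreeMonoid.toList hst).symm
      obtain ⟨hs, ht⟩ := List.append_eq_nil_iff.mp h1
      have hs' : s = 1 := FreeMonoid.toList.injective (by simpa using hs)
      have ht' : t = 1 := FreeMonoid.toList.injective (by simpa using ht)
      exact ⟨_, .nil _, .nil _, by simp [LQuiver.wlabel, ht'],
        by simp [LQuiver.wlabel, hs']⟩
  | cons e w ih =>
      intro s t hst
      induction s using FreeMonoid.recOn with
      | one =>
          refine ⟨_, .cons e w, .nil _, ?_, by simp [LQuiver.wlabel]⟩
          rw [hst, one_mul]
      | of_mul c s' _ =>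
          have h1 : FreeMonoid.toList (Q.wlabel (Walk.cons e w))
              = FreeMonoid.toList (FreeMonoid.of c * s' * t) := by rw [hst]
          simp only [LQuiver.wlabel, FreeMonoid.toList_mul, FreeMonoid.toList_of,
            List.singleton_append, List.cons_append, List.cons.injEq] at h1
          obtain ⟨hc, hrest⟩ := h1
          have hw : Q.wlabel w = s' * t := FreeMonoid.toList.injective (by
            rw [FreeMonoid.toList_mul]; simpa using hrest)
          obtain ⟨x, p, q, hp, hq⟩ := ih s' t hw
          refine ⟨x, p, .cons e q, hp, ?_⟩
          simp only [LQuiver.wlabel, hq, hc]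

end AuxWalk

/-- rewriting with a divisor monomial of minimal signature only increases
signatures. -/
theorem rew_and_signatures {V E X R : Type*} [CommRing R] (Q : LQuiver V E X)
    (g : MonoidAlgebra R (FreeMonoid X)) (m : FreeMonoid X)
    (hm : m ∈ g.coeff.support) (hsig : Q.sigW m = Q.sig g)
    (f h : MonoidAlgebra R (FreeMonoid X)) (lam : R) (a b : FreeMonoid X)
    (hdvd : a * m * b ∈ f.coeff.support)
    (hh : h = f + lam • (mono R a * g * mono R b)) :
    Q.sig f ⊆ Q.sig h ∧ Q.sig f ⊆ Q.sigW (a * m * b) := by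
  classical
  have hsub : ∀ uv ∈ Q.sig f, uv ∈ Q.sigW (a * m * b) := fun uv huv =>
    Set.mem_iInter₂.mp huv _ hdvd
  have key : ∀ uv ∈ Q.sig f, ∀ m' ∈ g.coeff.support, uv ∈ Q.sigW (a * m' * b) := by
    intro uv huv m' hm'
    obtain ⟨w, hw⟩ := hsub uv huv
    obtain ⟨x, p, q, hp, hq⟩ := Q.walk_split w (a * m) b (by rw [hw, mul_assoc])
    obtain ⟨y, p2, q2, hp2, hq2⟩ := Q.walk_split q a m hq
    have hxy : (x, y) ∈ Q.sig g := hsig ▸ ⟨p2, hp2⟩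
    obtain ⟨w2, hw2⟩ := Set.mem_iInter₂.mp hxy m' hm'
    exact ⟨(p.comp w2).comp q2, by
      rw [Q.wlabel_comp, Q.wlabel_comp, hq2, hw2, hp, mul_assoc]⟩
  refine ⟨?_, hsub⟩
  intro uv huv
  apply Set.mem_iInter₂.mpr
  intro n hn
  rw [hh, MonoidAlgebra.coeff_add] at hn
  rcases Finset.mem_union.mp (Finsupp.support_add hn) with hn | hn
  · exact Set.mem_iInter₂.mp huv n hn
  · have hn2 : n ∈ (mono R a * g * mono R b).coeff.support :=
        Finsupp.support_smul (by rwa [MonoidAlgebra.coeff_smul] at hn)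
    have hn3 := MonoidAlgebra.support_coeff_mul_subset _ _ hn2
    rw [Finset.mem_mul] at hn3
    obtain ⟨y, hy, z, hz, hyz⟩ := hn3
    have hy2 := MonoidAlgebra.support_coeff_mul_subset _ _ hy
    rw [Finset.mem_mul] at hy2
    obtain ⟨y1, hy1, y2, hy2', hy12⟩ := hy2
    have ha : y1 = a := by
      simpa using Finsupp.support_single_subset (by rwa [mono, MonoidAlgebra.coeff_single] at hy1)
    have hb : z = b := by
      simpa using Finsupp.support_single_subset (by rwa [mono, MonoidAlgebra.coeff_single] at hz)
    have : n = a * y2 * b := by rw [← hyz, ← hy12, ha, hb]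
    rw [this]
    exact key uv huv y2 hy2'
end

section
/- Let K be a field, F ⊆ K⟨X⟩, G ⊆ (F) (the two-sided ideal generated by F), and f ∈ K⟨X⟩ such that f →*_G 0 under standard polynomial reduction with respect to a fixed monomial order. Then, for all labelled quivers Q with labels in X such that all elements of G are both Q-consequences of F and Q-order compatible, the polynomial f is compatible with Q if and only if f is a Q-consequence of F. -/
open scoped BigOperators

universe u₁ u₂ u₃ u₄ u₅

section Aux

namespace LQuiver

variable {V : Type u₁} {E : Type u₂} {X : Type u₃}

/-- Concatenation of walks. -/
def Walk.append_s9 {Q : LQuiver V E X} : ∀ {u w v : V}, Q.Walk u w → Q.Walk w v → Q.Walk u v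
  | _, _, _, p, .nil _ => p
  | _, _, _, p, .cons e q => .cons e (p.append_s9 q)

lemma wlabel_append_s9 {Q : LQuiver V E X} : ∀ {u w v : V} (p : Q.Walk u w) (q : Q.Walk w v),
    Q.wlabel (p.append_s9 q) = Q.wlabel q * Q.wlabel p
  | _, _, _, p, .nil _ => by simp [Walk.append_s9, wlabel]
  | _, _, _, p, .cons e q => by
      simp [Walk.append_s9, wlabel, wlabel_append_s9 p q, mul_assoc]

lemma sigW_mul {Q : LQuiver V E X} {m m' : FreeMonoid X} {u w v : V}
    (h1 : (u, w) ∈ Q.sigW m') (h2 : (w, v) ∈ Q.sigW m) : (u, v) ∈ Q.sigW (m * m') := by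
  obtain ⟨p, hp⟩ := h1
  obtain ⟨q, hq⟩ := h2
  exact ⟨p.append_s9 q, by rw [wlabel_append_s9, hp, hq]⟩

lemma sigW_split_aux {Q : LQuiver V E X} : ∀ {u v : V} (p : Q.Walk u v)
    (m₁ m₂ : FreeMonoid X), Q.wlabel p = m₁ * m₂ →
      ∃ w, (w, v) ∈ Q.sigW m₁ ∧ (u, w) ∈ Q.sigW m₂
  | _, _, .nil v, m₁, m₂, h => by
    have h' : m₁.toList ++ m₂.toList = [] := by
      simpa [wlabel, FreeMonoid.toList_mul] using (congrArg FreeMonoid.toList h).symm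
    obtain ⟨e1, e2⟩ := List.append_eq_nil_iff.mp h'
    have h1 : m₁ = 1 := FreeMonoid.toList.injective e1
    have h2 : m₂ = 1 := FreeMonoid.toList.injective e2
    exact ⟨v, ⟨.nil v, by simp [wlabel, h1]⟩, ⟨.nil v, by simp [wlabel, h2]⟩⟩
  | _, _, .cons e p, m₁, m₂, h => by
    rcases hm : m₁.toList with _ | ⟨x, r⟩
    · have h1 : m₁ = 1 := FreeMonoid.toList.injective hm
      refine ⟨Q.tgt e, ⟨.nil _, by simp [wlabel, h1]⟩, ⟨.cons e p, ?_⟩⟩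
      rw [h, h1, one_mul]
    · have h' : Q.lab e :: (Q.wlabel p).toList = x :: (r ++ m₂.toList) := by
      -- toList of both sides of h
        have := congrArg FreeMonoid.toList h
        simpa [wlabel, FreeMonoid.toList_mul, FreeMonoid.toList_of, hm] using this
      have hx : Q.lab e = x := (List.cons.injEq _ _ _ _ ▸ h').1
      have hrest : Q.wlabel p = FreeMonoid.ofList r * m₂ := by
        apply FreeMonoid.toList.injective
        simpa [FreeMonoid.toList_mul, FreeMonoid.toList_ofList]
          using (List.cons.injEq _ _ _ _ ▸ h').2
      obtain ⟨w, ⟨q1, hq1⟩, hw2⟩ := sigW_split_aux p (FreeMonoid.ofList r) m₂ hrest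
      refine ⟨w, ⟨.cons e q1, ?_⟩, hw2⟩
      apply FreeMonoid.toList.injective
      simp [wlabel, hq1, hm, hx, FreeMonoid.toList_mul, FreeMonoid.toList_of,
        FreeMonoid.toList_ofList]

lemma sigW_split {Q : LQuiver V E X} {m₁ m₂ : FreeMonoid X} {u v : V}
    (h : (u, v) ∈ Q.sigW (m₁ * m₂)) : ∃ w, (w, v) ∈ Q.sigW m₁ ∧ (u, w) ∈ Q.sigW m₂ := by
  obtain ⟨p, hp⟩ := h
  exact sigW_split_aux p m₁ m₂ hp

variable {R : Type u₄} [CommRing R]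

lemma mem_sig {Q : LQuiver V E X} {f : MonoidAlgebra R (FreeMonoid X)} {uv : V × V} :
    uv ∈ Q.sig f ↔ ∀ m ∈ f.coeff.support, uv ∈ Q.sigW m := by
  simp [sig]

lemma sig_anti {Q : LQuiver V E X} {f g : MonoidAlgebra R (FreeMonoid X)}
    (h : g.coeff.support ⊆ f.coeff.support) : Q.sig f ⊆ Q.sig g := by
  intro uv huv
  rw [mem_sig] at huv ⊢
  exact fun m hm => huv m (h hm)

lemma sig_mul {Q : LQuiver V E X} {p q : MonoidAlgebra R (FreeMonoid X)} {u w v : V}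
    (hq : (u, w) ∈ Q.sig q) (hp : (w, v) ∈ Q.sig p) : (u, v) ∈ Q.sig (p * q) := by
  classical
  rw [mem_sig]
  intro m hm
  obtain ⟨m₁, h₁, m₂, h₂, rfl⟩ := Finset.mem_mul.mp (MonoidAlgebra.support_coeff_mul_subset p q hm)
  exact sigW_mul (mem_sig.mp hq _ h₂) (mem_sig.mp hp _ h₁)

lemma sig_smul {Q : LQuiver V E X} {f : MonoidAlgebra R (FreeMonoid X)} (c : R) :
    Q.sig f ⊆ Q.sig (c • f) :=
  sig_anti (by rw [MonoidAlgebra.coeff_smul]; exact Finsupp.support_smul)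

lemma sig_mono [Nontrivial R] {Q : LQuiver V E X} (m : FreeMonoid X) :
    Q.sig (mono R m) = Q.sigW m := by
  have : (mono R m).coeff.support = {m} := Finsupp.support_single_ne_zero m one_ne_zero
  simp [sig, this]

end LQuiver

end Aux

/-- if `G ⊆ (F)` and `f →*_G 0`, then for every quiver `Q` such that all
elements of `G` are `Q`-consequences of `F` and `Q`-order compatible, `f` is compatible
with `Q` iff `f` is a `Q`-consequence of `F`. -/
theorem reduction_crit {X K : Type*} [Field K]
    (ord : LinearOrder (FreeMonoid X)) (hord : IsMonomialOrder ord)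
    (F G : Set (MonoidAlgebra K (FreeMonoid X)))
    (hGF : ∀ g ∈ G, ∃ (n : ℕ) (a b f' : Fin n → MonoidAlgebra K (FreeMonoid X)),
      (∀ i, f' i ∈ F) ∧ g = ∑ i, a i * f' i * b i)
    (f : MonoidAlgebra K (FreeMonoid X))
    (hred : Relation.ReflTransGen (ReduceStep ord G) f 0) :
    ∀ {V E : Type*} (Q : LQuiver V E X),
      (∀ g ∈ G, Q.QConsequence F g ∧ QOrderCompatible Q ord g) →
      (Q.Compatible f ↔ Q.QConsequence F f) := by
  intro V E Q hG
  constructor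
  case mpr => exact fun h => h.1
  case mp =>
    intro hcf
    revert hcf
    induction hred using Relation.ReflTransGen.head_induction_on with
    | refl =>
      intro h0
      exact ⟨h0, 0, Fin.elim0, Fin.elim0, Fin.elim0, fun i => i.elim0, by simp,
        fun uv _ i => i.elim0⟩
    | @head f' h' hstep htail ih =>
      intro hcf
      obtain ⟨g, hgG, hg0, a, b, hsupp, hdef⟩ := hstep
      obtain ⟨hgcons, hgord⟩ := hG g hgG
      set c : K := f'.coeff (a * LM ord g * b) / g.coeff (LM ord g) with hc
      have hf'eq : f' = h' + c • (mono K a * g * mono K b) := by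
        rw [hdef]; abel
      -- decompose walks over σ f'
      have decomp : ∀ uv ∈ Q.sig f', ∃ w₁ w₂, (uv.1, w₁) ∈ Q.sigW b ∧
          ((w₁, w₂) ∈ Q.sig g) ∧ (w₂, uv.2) ∈ Q.sigW a := by
        intro uv huv
        have h1 : uv ∈ Q.sigW (a * LM ord g * b) := LQuiver.mem_sig.mp huv _ hsupp
        obtain ⟨w₁, hA, hb⟩ := LQuiver.sigW_split (u := uv.1) (v := uv.2) h1
        obtain ⟨w₂, ha, hlm⟩ := LQuiver.sigW_split hA
        exact ⟨w₁, w₂, hb, hgord.2 ▸ hlm, ha⟩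
      -- σ f' ⊆ σ h'
      have key : Q.sig f' ⊆ Q.sig h' := by
        classical
        intro uv huv
        obtain ⟨w₁, w₂, hb, hgsig, ha⟩ := decomp uv huv
        rw [LQuiver.mem_sig]
        intro m hm
        have hm' : m ∈ f'.coeff.support ∪ (mono K a * g * mono K b).coeff.support := by
          have h1 : h'.coeff.support ⊆ f'.coeff.support ∪ (c • (mono K a * g * mono K b)).coeff.support := by
            rw [hdef, sub_eq_add_neg, MonoidAlgebra.coeff_add]
            refine (Finsupp.support_add).trans ?_
            exact Finset.union_subset_union (le_refl _)
              (by rw [MonoidAlgebra.coeff_neg, Finsupp.support_neg])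
          have h2 := h1 hm
          rcases Finset.mem_union.mp h2 with h3 | h3
          · exact Finset.mem_union_left _ h3
          · exact Finset.mem_union_right _ (by rw [MonoidAlgebra.coeff_smul] at h3; exact Finsupp.support_smul h3)
        rcases Finset.mem_union.mp hm' with hm2 | hm2
        · exact LQuiver.mem_sig.mp huv m hm2
        · obtain ⟨m₁, h₁, m₂, h₂, rfl⟩ :=
            Finset.mem_mul.mp (MonoidAlgebra.support_coeff_mul_subset _ _ hm2)
          obtain ⟨m₃, h₃, m₄, h₄, rfl⟩ :=
            Finset.mem_mul.mp (MonoidAlgebra.support_coeff_mul_subset _ _ h₁)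
          rw [show (mono K a).coeff.support = {a} from
            Finsupp.support_single_ne_zero a one_ne_zero, Finset.mem_singleton] at h₃
          rw [show (mono K b).coeff.support = {b} from
            Finsupp.support_single_ne_zero b one_ne_zero, Finset.mem_singleton] at h₂
          -- m = a * m₄ * b with m₄ ∈ supp g
          have hm4 : (w₁, w₂) ∈ Q.sigW m₄ := LQuiver.mem_sig.mp hgsig _ h₄
          have hb' : (uv.1, w₁) ∈ Q.sigW m₂ := by rw [h₂]; exact hb
          have ha' : (w₂, uv.2) ∈ Q.sigW m₃ := by rw [h₃]; exact ha
          have s1 : (uv.1, w₂) ∈ Q.sigW (m₄ * m₂) := LQuiver.sigW_mul hb' hm4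
          have s2 : (uv.1, uv.2) ∈ Q.sigW (m₃ * (m₄ * m₂)) := LQuiver.sigW_mul s1 ha'
          rwa [← mul_assoc] at s2
      have hch : Q.Compatible h' := hcf.mono key
      obtain ⟨-, n, gh, ah, bh, hFh, heqh, hcondh⟩ := ih hch
      obtain ⟨-, n', g', a', b', hF', hgeq, hcond'⟩ := hgcons
      refine ⟨hcf, n + n', Fin.addCases gh g',
        Fin.addCases ah (fun j => c • (mono K a * a' j)),
        Fin.addCases bh (fun j => b' j * mono K b), ?_, ?_, ?_⟩
      · intro i
        induction i using Fin.addCases with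
        | left i => simpa using hFh i
        | right j => simpa using hF' j
      · rw [Fin.sum_univ_add]
        simp only [Fin.addCases_left, Fin.addCases_right]
        rw [← heqh, hf'eq]
        congr 1
        rw [hgeq]
        simp only [Finset.mul_sum, Finset.sum_mul, Finset.smul_sum, smul_mul_assoc, mul_assoc]
      · intro uv huv i
        induction i using Fin.addCases with
        | left i =>
          obtain ⟨ui, vi, h1, h2, h3⟩ := hcondh uv (key huv) i
          exact ⟨ui, vi, by simpa using h1, by simpa using h2, by simpa using h3⟩
        | right j =>
          obtain ⟨w₁, w₂, hb, hgsig, ha⟩ := decomp uv huv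
          obtain ⟨uj, vj, h1, h2, h3⟩ := hcond' (w₁, w₂) hgsig j
          refine ⟨uj, vj, ?_, by simpa using h2, ?_⟩
          · have hb' : (uv.1, w₁) ∈ Q.sig (mono K b) := by
              rw [LQuiver.sig_mono]; exact hb
            simpa using LQuiver.sig_mul hb' h1
          · have ha' : (w₂, uv.2) ∈ Q.sig (mono K a) := by
              rw [LQuiver.sig_mono]; exact ha
            have := LQuiver.sig_smul (Q := Q) (f := mono K a * a' j) c
              (LQuiver.sig_mul h3 ha')
            simpa using this
end

section
/- Assume all edges of the labelled quiver Q have unique labels (the labelling l : E → X is injective). Fix a monomial order ≤ on ⟨X⟩ and let g, g' ∈ K⟨X⟩ be nonzero polynomials compatible with Q. If there exist words a, r, b ∈ ⟨X⟩ with r nonempty such that LM(g) = a·r and LM(g') = r·b (an overlap of the leading monomials), then the word a·r·b is compatible with Q, i.e., σ(a·r·b) ≠ ∅. -/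
open scoped BigOperators

universe u₁ u₂ u₃ u₄ u₅

namespace LQuiver
variable {V : Type u₁} {E : Type u₂} {X : Type u₃}
variable {Q : LQuiver V E X}

def wlist : ∀ {u v : V}, Q.Walk u v → List E
  | _, _, .nil _ => []
  | _, _, .cons e p => e :: wlist p

lemma toList_wlabel : ∀ {u v : V} (w : Q.Walk u v),
    FreeMonoid.toList (Q.wlabel w) = (wlist w).map Q.lab
  | _, _, .nil _ => by simp [wlabel, wlist]
  | _, _, .cons e p => by simp [wlabel, wlist, toList_wlabel p]

def wappend : ∀ {u v w : V}, Q.Walk v w → Q.Walk u v → Q.Walk u w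
  | _, _, _, .nil _, q => q
  | _, _, _, .cons e p, q => .cons e (wappend p q)

lemma wlabel_wappend : ∀ {u v w : V} (p : Q.Walk v w) (q : Q.Walk u v),
    Q.wlabel (wappend p q) = Q.wlabel p * Q.wlabel q
  | _, _, _, .nil _, q => by simp [wappend, wlabel]
  | _, _, _, .cons e p, q => by
      simp [wappend, wlabel, wlabel_wappend p q, mul_assoc]

lemma eq_of_wlist_nil : ∀ {u v : V} (w : Q.Walk u v), wlist w = [] → u = v
  | _, _, .nil _, _ => rfl
  | _, _, .cons e p, h => by simp [wlist] at h

lemma src_eq : ∀ {u v : V} (w : Q.Walk u v) (h : wlist w ≠ []),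
    u = Q.src ((wlist w).getLast h)
  | _, _, .nil _, h => by simp [wlist] at h
  | u, _, .cons e p, h => by
      rcases hl : wlist p with _ | ⟨e', l⟩
      · have := eq_of_wlist_nil p hl
        simp [wlist, hl, List.getLast]
        exact this
      · have h' : wlist p ≠ [] := by simp [hl]
        have := src_eq p h'
        simpa [wlist, List.getLast_cons, hl] using this

lemma split : ∀ {u v : V} (w : Q.Walk u v) (m₁ m₂ : FreeMonoid X),
    Q.wlabel w = m₁ * m₂ →
    ∃ (mid : V) (w₁ : Q.Walk mid v) (w₂ : Q.Walk u mid),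
      Q.wlabel w₁ = m₁ ∧ Q.wlabel w₂ = m₂
  | v, _, .nil _, m₁, m₂, h => by
      have h1 : m₁ = 1 ∧ m₂ = 1 := by
        have := congrArg FreeMonoid.toList h
        simp [wlabel] at this
        constructor <;> apply FreeMonoid.toList.injective <;> simp [this.1, this.2]
      exact ⟨v, .nil v, .nil v, by simp [wlabel, h1.1], by simp [wlabel, h1.2]⟩
  | u, _, .cons e p, m₁, m₂, h => by
      rcases hm : FreeMonoid.toList m₁ with _ | ⟨x, l⟩
      · have hm1 : m₁ = 1 := FreeMonoid.toList.injective (by simp [hm])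
        refine ⟨_, .nil _, .cons e p, by simp [wlabel, hm1], ?_⟩
        rw [hm1, one_mul] at h; exact h
      · have hx : FreeMonoid.toList (Q.wlabel p)
            = FreeMonoid.toList (FreeMonoid.ofList l * m₂) ∧ Q.lab e = x := by
          have := congrArg FreeMonoid.toList h
          simp [wlabel, hm] at this
          exact ⟨by simp [this.2], this.1⟩
        have hp : Q.wlabel p = FreeMonoid.ofList l * m₂ := FreeMonoid.toList.injective hx.1
        obtain ⟨mid, w₁, w₂, hw₁, hw₂⟩ := split p (FreeMonoid.ofList l) m₂ hp
        refine ⟨mid, .cons e w₁, w₂, ?_, hw₂⟩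
        apply FreeMonoid.toList.injective
        simp [wlabel, hw₁, hx.2, hm]

end LQuiver

/-- with unique labels, the source of an overlap ambiguity of two compatible
polynomials is compatible. -/
theorem overlap_source_compatible {V E X K : Type*} [Field K] (Q : LQuiver V E X)
    (hinj : Function.Injective Q.lab)
    (ord : LinearOrder (FreeMonoid X)) (hord : IsMonomialOrder ord)
    (g g' : MonoidAlgebra K (FreeMonoid X)) (hg0 : g ≠ 0) (hg'0 : g' ≠ 0)
    (hg : Q.Compatible g) (hg' : Q.Compatible g')
    (a r b : FreeMonoid X) (hr : r ≠ 1)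
    (h1 : LM ord g = a * r) (h2 : LM ord g' = r * b) :
    (Q.sigW (a * r * b)).Nonempty := by
  classical
  obtain ⟨⟨u, v⟩, huv⟩ := hg
  obtain ⟨⟨u', v'⟩, huv'⟩ := hg'
  have hLMg : LM ord g ∈ g.coeff.support := by
    simp only [LM, dif_neg hg0]
    exact Finset.max'_mem _ _
  have hLMg' : LM ord g' ∈ g'.coeff.support := by
    simp only [LM, dif_neg hg'0]
    exact Finset.max'_mem _ _
  simp only [LQuiver.sig, Set.mem_iInter] at huv huv'
  have h3 : (u, v) ∈ Q.sigW (a * r) := h1 ▸ huv _ hLMg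
  have h4 : (u', v') ∈ Q.sigW (r * b) := h2 ▸ huv' _ hLMg'
  obtain ⟨p, hp⟩ := h3
  obtain ⟨q, hq⟩ := h4
  obtain ⟨mid2, p1, p2, hp1, hp2⟩ := LQuiver.split p a r hp
  obtain ⟨mid, q1, q2, hq1, hq2⟩ := LQuiver.split q r b hq
  -- wlist p2 = wlist q1
  have hlist : LQuiver.wlist p2 = LQuiver.wlist q1 := by
    apply List.map_injective_iff.mpr hinj
    rw [← LQuiver.toList_wlabel, ← LQuiver.toList_wlabel, hp2, hq1]
  have hne : LQuiver.wlist p2 ≠ [] := by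
    intro h
    apply hr
    apply FreeMonoid.toList.injective
    rw [← hp2, LQuiver.toList_wlabel, h]
    simp
  have hne' : LQuiver.wlist q1 ≠ [] := hlist ▸ hne
  have hsrc : (u, v).1 = mid := by
    rw [LQuiver.src_eq p2 hne, LQuiver.src_eq q1 hne']
    congr 1
    exact List.getLast_congr _ _ hlist
  have hsrc' : u = mid := hsrc
  subst hsrc'
  refine ⟨(u', v), LQuiver.wappend p q2, ?_⟩
  rw [LQuiver.wlabel_wappend, hp, hq2]
end
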